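/- For each integer m > 1, define ψ_m(u) = ∏_{ζ: primitive m-th root of unity in ℂ} ((u + √(u²-1)) - ζ·(u - √(u²-1))) regarded as a polynomial in u. Then ψ_m(u) = 2^φ(m) · ∏_{1 ≤ r < m, gcd(r,m)=1} (u - cos(rπ/m)). -/

import Mathlib

open Complex Finset

theorem stmt_8 (m : ℕ) (hm : 1 < m) (u s : ℂ) (hs : s ^ 2 = u ^ 2 - 1) :
    ∏ ζ ∈ primitiveRoots m ℂ, ((u + s) - ζ * (u - s))
      = 2 ^ m.totient *
        ∏ r ∈ (Finset.Ico 1 m).filter (fun r => r.Coprime m),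
          (u - Complex.cos ((r : ℂ) * Real.pi / (m : ℂ))) := by
  have hm0 : m ≠ 0 := by omega
  haveI : NeZero m := ⟨hm0⟩
  have hmC : (m : ℂ) ≠ 0 := Nat.cast_ne_zero.mpr hm0
  have h1 : (u + s) * (u - s) = 1 := by linear_combination -hs
  set S := (Finset.Ico 1 m).filter (fun r => r.Coprime m) with hS
  have hζ0 : IsPrimitiveRoot (Complex.exp (2 * Real.pi * I / m)) m :=
    Complex.isPrimitiveRoot_exp m hm0
  have hmemS : ∀ r, r ∈ S ↔ (1 ≤ r ∧ r < m) ∧ r.Coprime m := by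
    intro r; simp [hS, Finset.mem_filter, Finset.mem_Ico]
  -- primitive roots as image
  have himg : primitiveRoots m ℂ
      = S.image (fun r : ℕ => Complex.exp (2 * Real.pi * I / m) ^ r) := by
    ext ξ
    rw [mem_primitiveRoots (by omega : 0 < m), hζ0.isPrimitiveRoot_iff, Finset.mem_image]
    constructor
    · rintro ⟨i, hik, hco, rfl⟩
      refine ⟨i, (hmemS i).2 ⟨⟨?_, hik⟩, hco⟩, rfl⟩
      rcases Nat.eq_zero_or_pos i with h0 | h
      · exfalso; rw [h0, Nat.coprime_zero_left] at hco; omega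
      · exact h
    · rintro ⟨i, hi, rfl⟩
      obtain ⟨⟨-, h2⟩, hco⟩ := (hmemS i).1 hi
      exact ⟨i, h2, hco, rfl⟩
  have hinj : ∀ x ∈ S, ∀ y ∈ S, Complex.exp (2 * Real.pi * I / m) ^ x
      = Complex.exp (2 * Real.pi * I / m) ^ y → x = y := by
    intro x hx y hy hxy
    obtain ⟨⟨-, hx2⟩, -⟩ := (hmemS x).1 hx
    obtain ⟨⟨-, hy2⟩, -⟩ := (hmemS y).1 hy
    exact hζ0.pow_inj hx2 hy2 hxy
  -- abbreviations
  set β : ℕ → ℂ := fun r => Complex.exp (((r : ℂ) * Real.pi / m) * I) with hβ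
  set γ : ℕ → ℂ := fun r => Complex.exp ((-((r : ℂ) * Real.pi / m)) * I) with hγ
  -- left side factorization
  have hLfac : ∀ r ∈ S, (u + s) - Complex.exp (2 * Real.pi * I / m) ^ r * (u - s)
      = ((u + s) - β r) * ((u + s) + β r) * (u - s) := by
    intro r _
    have hb2 : β r * β r = Complex.exp (2 * Real.pi * I / m) ^ r := by
      simp only [hβ]
      rw [← Complex.exp_add, ← Complex.exp_nat_mul]
      congr 1
      field_simp
      ring
    linear_combination (u - s) * hb2 - (u + s) * h1
  -- right side factorization
  have hRfac : ∀ r ∈ S, 2 * (u - Complex.cos ((r : ℂ) * Real.pi / (m : ℂ)))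
      = ((u + s) - β r) * ((u + s) - γ r) * (u - s) := by
    intro r _
    have hcos : 2 * Complex.cos ((r : ℂ) * Real.pi / (m : ℂ)) = β r + γ r :=
      Complex.two_cos _
    have hbc : β r * γ r = 1 := by
      simp only [hβ, hγ]
      rw [← Complex.exp_add,
        show ((r : ℂ) * Real.pi / m) * I + (-((r : ℂ) * Real.pi / m)) * I = 0 by ring,
        Complex.exp_zero]
    linear_combination (-1 : ℂ) * hcos - ((u + s) - β r - γ r) * h1 - (u - s) * hbc
  -- cardinality
  have hcard : S.card = m.totient := by
    rw [Nat.totient_eq_card_coprime]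
    congr 1
    ext a
    simp only [hS, Finset.mem_filter, Finset.mem_Ico, Finset.mem_range]
    constructor
    · rintro ⟨⟨-, h2⟩, hco⟩; exact ⟨h2, hco.symm⟩
    · rintro ⟨h2, hco⟩
      refine ⟨⟨?_, h2⟩, hco.symm⟩
      rcases Nat.eq_zero_or_pos a with h0 | h
      · exfalso; rw [h0, Nat.coprime_zero_right] at hco; omega
      · exact h
  have hmapS : ∀ r ∈ S, m - r ∈ S := by
    intro r hr
    obtain ⟨⟨h1r, h2r⟩, hco⟩ := (hmemS r).1 hr
    refine (hmemS _).2 ⟨⟨by omega, by omega⟩, ?_⟩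
    have hc1 : Nat.Coprime (m - r) r :=
      (Nat.coprime_sub_self_left (by omega)).mpr hco.symm
    have hc2 := Nat.coprime_add_self_right.mpr hc1
    rwa [show r + (m - r) = m by omega] at hc2
  -- key product swap
  have hswap : ∏ r ∈ S, ((u + s) + β r) = ∏ r ∈ S, ((u + s) - γ r) := by
    refine Finset.prod_nbij' (fun r => m - r) (fun r => m - r) ?_ ?_ ?_ ?_ ?_
    · intro r hr; exact hmapS r hr
    · intro r hr; exact hmapS r hr
    · intro r hr
      obtain ⟨⟨h1r, h2r⟩, -⟩ := (hmemS r).1 hr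
      show m - (m - r) = r
      omega
    · intro r hr
      obtain ⟨⟨h1r, h2r⟩, -⟩ := (hmemS r).1 hr
      show m - (m - r) = r
      omega
    · intro r hr
      obtain ⟨⟨h1r, h2r⟩, -⟩ := (hmemS r).1 hr
      have hγm : γ (m - r) = -β r := by
        simp only [hγ, hβ]
        rw [Nat.cast_sub (by omega : r ≤ m)]
        rw [show (-(((m : ℂ) - r) * Real.pi / m)) * I
            = ((r : ℂ) * Real.pi / m) * I + -(Real.pi * I) by field_simp; ring]
        rw [Complex.exp_add, Complex.exp_neg, Complex.exp_pi_mul_I]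
        norm_num
      show (u + s) + β r = (u + s) - γ (m - r)
      rw [hγm]; ring
  -- put it together
  rw [himg, Finset.prod_image hinj, Finset.prod_congr rfl hLfac]
  have hR : (2 : ℂ) ^ m.totient *
      ∏ r ∈ S, (u - Complex.cos ((r : ℂ) * Real.pi / (m : ℂ)))
      = ∏ r ∈ S, (((u + s) - β r) * ((u + s) - γ r) * (u - s)) := by
    rw [← hcard, ← Finset.prod_const (2 : ℂ), ← Finset.prod_mul_distrib]
    exact Finset.prod_congr rfl hRfac
  rw [hR]
  rw [Finset.prod_mul_distrib, Finset.prod_mul_distrib, Finset.prod_mul_distrib,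
    Finset.prod_mul_distrib, hswap]
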